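/- Let (G_i) be a sequence of finite abelian groups with invariant factors N_{i,1} | ... | N_{i,r}, and let k_max be the largest index k for which (N_{i,k})_i is bounded. If (H'_i ⊆ G_i) is a sequence of subgroups such that each H'_i is generated by strictly fewer than r - k_max elements, then the indices [G_i : H'_i] are unbounded as i → ∞. -/

import Mathlib

lemma card_closure_le_pow {A : Type*} [AddCommGroup A] (n : ℕ) [NeZero n]
    (h : ∀ x : A, n • x = 0) (S : Finset A) :
    Nat.card (AddSubgroup.closure (S : Set A)) ≤ n ^ S.card := by
  haveI : Module (ZMod n) A := AddCommMonoid.zmodModule h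
  have hsurj : Function.Surjective
      (fun c : S → ZMod n => (⟨∑ x ∈ S.attach, (c x).val • (x : A),
        AddSubgroup.sum_mem _ fun x _ => AddSubgroup.nsmul_mem _
          (AddSubgroup.subset_closure x.2) _⟩ : AddSubgroup.closure (S : Set A))) := by
    rintro ⟨y, hy⟩
    have hy' : y ∈ Submodule.span (ZMod n) (S : Set A) := by
      have hle : AddSubgroup.closure (S : Set A) ≤
          (Submodule.span (ZMod n) (S : Set A)).toAddSubgroup :=
        (AddSubgroup.closure_le _).mpr Submodule.subset_span
      exact hle hy
    obtain ⟨f, -, hf⟩ := Submodule.mem_span_finset.mp hy'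
    refine ⟨fun x => f x, ?_⟩
    simp only [Subtype.mk.injEq]
    rw [← hf, ← Finset.sum_attach S (fun i => f i • i)]
    refine Finset.sum_congr rfl fun x _ => ?_
    rw [← Nat.cast_smul_eq_nsmul (ZMod n), ZMod.natCast_zmod_val]
  have hle := Nat.card_le_card_of_surjective _ hsurj
  simpa [Nat.card_fun, Nat.card_zmod] using hle

theorem stmt7 (r kmax : ℕ)
    (N : ℕ → Fin r → ℕ) (hpos : ∀ i k, 0 < N i k)
    (hchain : ∀ i, ∀ k l : Fin r, k ≤ l → N i k ∣ N i l)
    (hunbdd : ∀ k : Fin r, kmax ≤ (k : ℕ) → ∀ C : ℕ, ∃ i, C < N i k)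
    (H' : ∀ i, AddSubgroup (∀ k : Fin r, ZMod (N i k)))
    (hgen : ∀ i, ∃ S : Finset (∀ k : Fin r, ZMod (N i k)),
      S.card < r - kmax ∧
        AddSubgroup.closure (S : Set (∀ k : Fin r, ZMod (N i k))) = H' i) :
    ∀ L : ℕ, ∃ i, L < (H' i).index := by
  intro L
  -- kmax < r
  obtain ⟨S0, hS0, -⟩ := hgen 0
  have hk : kmax < r := by omega
  set k0 : Fin r := ⟨kmax, hk⟩ with hk0
  obtain ⟨i, hi⟩ := hunbdd k0 (le_refl _) L
  refine ⟨i, ?_⟩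
  set M := N i k0 with hM
  haveI : ∀ k, NeZero (N i k) := fun k => ⟨(hpos i k).ne'⟩
  haveI : NeZero M := ⟨(hpos i k0).ne'⟩
  set M' : Fin r → ℕ := fun k => if kmax ≤ (k : ℕ) then M else 1 with hM'
  have hdvd : ∀ k, M' k ∣ N i k := by
    intro k
    by_cases h : kmax ≤ (k : ℕ)
    · simpa [hM', if_pos h] using hchain i k0 k h
    · simp [hM', if_neg h]
  have hdvdM : ∀ k, M' k ∣ M := by
    intro k
    by_cases h : kmax ≤ (k : ℕ) <;> simp [hM', h]
  haveI : ∀ k, NeZero (M' k) := fun k => by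
    by_cases h : kmax ≤ (k : ℕ)
    · simp only [hM', if_pos h]; exact ⟨(hpos i k0).ne'⟩
    · simp only [hM', if_neg h]; exact ⟨one_ne_zero⟩
  -- the projection hom
  let φ : (∀ k : Fin r, ZMod (N i k)) →+ (∀ k : Fin r, ZMod (M' k)) :=
    { toFun := fun x k => ZMod.castHom (hdvd k) (ZMod (M' k)) (x k)
      map_zero' := by ext k; exact map_zero (ZMod.castHom (hdvd k) (ZMod (M' k)))
      map_add' := by
        intro x y; ext k
        exact map_add (ZMod.castHom (hdvd k) (ZMod (M' k))) (x k) (y k) }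
  have hφsurj : Function.Surjective φ := by
    intro b
    refine ⟨fun k => ((b k).val : ZMod (N i k)), ?_⟩
    ext k
    show ZMod.castHom (hdvd k) (ZMod (M' k)) ((b k).val : ZMod (N i k)) = b k
    rw [map_natCast, ZMod.natCast_zmod_val]
  obtain ⟨S, hScard, hSclo⟩ := hgen i
  set K := (H' i).map φ with hK
  -- relate indices
  have h1 : (K.comap φ).index = K.index := AddSubgroup.index_comap_of_surjective _ hφsurj
  have h2 : H' i ≤ K.comap φ := fun x hx =>
    AddSubgroup.mem_comap.mpr (AddSubgroup.mem_map_of_mem _ hx)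
  have h3 : K.index ∣ (H' i).index := h1 ▸ AddSubgroup.index_dvd_of_le h2
  have hHne : (H' i).index ≠ 0 := AddSubgroup.index_ne_zero_of_finite
  have h4 : K.index ≤ (H' i).index := Nat.le_of_dvd (Nat.pos_of_ne_zero hHne) h3
  -- K is generated by few elements
  have hKclo : K = AddSubgroup.closure (↑(S.image φ) : Set (∀ k : Fin r, ZMod (M' k))) := by
    rw [hK, ← hSclo, AddMonoidHom.map_closure, Finset.coe_image]
  have htor : ∀ x : (∀ k : Fin r, ZMod (M' k)), M • x = 0 := by
    intro x
    ext k
    show M • x k = 0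
    rw [nsmul_eq_mul]
    have : (M : ZMod (M' k)) = 0 := (ZMod.natCast_eq_zero_iff _ _).mpr (hdvdM k)
    rw [this, zero_mul]
  have hKcard : Nat.card K ≤ M ^ S.card := by
    rw [hKclo]
    calc Nat.card (AddSubgroup.closure (↑(S.image φ) : Set (∀ k : Fin r, ZMod (M' k))))
        ≤ M ^ (S.image φ).card := card_closure_le_pow M htor _
      _ ≤ M ^ S.card := Nat.pow_le_pow_right (hpos i k0) Finset.card_image_le
  -- cardinality of the codomain
  have hcardfilter : r - kmax ≤ (Finset.univ.filter fun k : Fin r => kmax ≤ (k : ℕ)).card := by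
    have hneg : (Finset.univ.filter fun k : Fin r => ¬ kmax ≤ (k : ℕ)).card ≤ kmax := by
      calc (Finset.univ.filter fun k : Fin r => ¬ kmax ≤ (k : ℕ)).card
          ≤ (Finset.range kmax).card := by
            refine Finset.card_le_card_of_injOn (fun k : Fin r => (k : ℕ)) ?_ ?_
            · intro k hkk
              simp only [Finset.mem_filter, Finset.mem_univ, true_and, not_le] at hkk
              simpa using hkk
            · intro a _ b _ hab
              exact Fin.ext hab
        _ = kmax := Finset.card_range _
    have := Finset.card_filter_add_card_filter_not
      (s := (Finset.univ : Finset (Fin r))) (p := fun k : Fin r => kmax ≤ (k : ℕ))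
    simp only [Finset.card_univ, Fintype.card_fin] at this
    omega
  have hBcard : Nat.card (∀ k : Fin r, ZMod (M' k)) =
      M ^ (Finset.univ.filter fun k : Fin r => kmax ≤ (k : ℕ)).card := by
    rw [Nat.card_pi]
    simp only [Nat.card_zmod, hM']
    rw [Finset.prod_ite, Finset.prod_const, Finset.prod_const]
    simp
  have hMle : M ^ (S.card + 1) ≤ Nat.card (∀ k : Fin r, ZMod (M' k)) := by
    rw [hBcard]
    exact Nat.pow_le_pow_right (hpos i k0) (by omega)
  have hlag : K.index * Nat.card K = Nat.card (∀ k : Fin r, ZMod (M' k)) :=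
    AddSubgroup.index_mul_card K
  have hKpos : 0 < Nat.card K := Nat.card_pos
  have hMK : M ≤ K.index := by
    have hmul : M * Nat.card K ≤ K.index * Nat.card K := by
      calc M * Nat.card K ≤ M * M ^ S.card := Nat.mul_le_mul_left _ hKcard
        _ = M ^ (S.card + 1) := by ring
        _ ≤ Nat.card (∀ k : Fin r, ZMod (M' k)) := hMle
        _ = K.index * Nat.card K := hlag.symm
    exact Nat.le_of_mul_le_mul_right hmul hKpos
  calc L < M := hi
    _ ≤ K.index := hMK
    _ ≤ (H' i).index := h4
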